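/- Fix real constants c and b with 0 < c ≤ ln 4 and b > 0, set r = ⌊ln(4)/c⌋, A_2 = √(2r)·c and A_1 = √(2·c·ln 4). For each n ≥ 1 let t^{(n)} be the Aurelian pattern (q_n = ⌊√(2n/r + 1/4) − 1/2⌋, t^{(n)}_k = (q_n − k + 1)·r for 1 ≤ k ≤ q_n and 0 otherwise) and let s^{(n)} be any transmission policy of length n (∑_{k≥1} s^{(n)}_k = n) that is efficient for c (U_c(s^{(n)}) ≤ U_c(t') for every transmission policy t' of length n). With U_c(t) = ∑_{k=1}^∞ 4^{−k}·exp(−t_k·c) and L_b(t) = (1/4)·∑_{k=1}^∞ 4^{−k}·exp(−t_k·b), one has liminf_{n→∞} ln( U_c(t^{(n)}) ) / ln( L_b(s^{(n)}) ) ≥ A_2 / A_1 > 0. -/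

import Mathlib

/-- Upper bound on the end-to-end distortion of a transmission pattern `t : {1,2,…} → ℕ`
(indexed here by `k ↦ t (k+1)`): `U_c(t) = ∑_{k≥1} 4^{−k} exp(−t_k c)`. -/
noncomputable def distortionUB (c : ℝ) (t : ℕ → ℕ) : ℝ :=
  ∑' k : ℕ, (4 : ℝ)⁻¹ ^ (k + 1) * Real.exp (-(t (k + 1) : ℝ) * c)

/-- Lower bound on the end-to-end distortion of a transmission pattern `t : {1,2,…} → ℕ`:
`L_b(t) = (1/4) ∑_{k≥1} 4^{−k} exp(−t_k b)`. -/
noncomputable def distortionLB (b : ℝ) (t : ℕ → ℕ) : ℝ :=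
  (1 / 4) * ∑' k : ℕ, (4 : ℝ)⁻¹ ^ (k + 1) * Real.exp (-(t (k + 1) : ℝ) * b)

/-- A transmission policy of length `n`: `∑_{k≥1} t_k = n`. -/
def IsPolicy (n : ℕ) (t : ℕ → ℕ) : Prop :=
  (∑' k : ℕ, (t (k + 1) : ENNReal)) = n

/-- A policy of length `n` is efficient for `c` if it minimizes `U_c` among all policies
of length `n`. -/
def IsEfficient (c : ℝ) (n : ℕ) (t : ℕ → ℕ) : Prop :=
  IsPolicy n t ∧ ∀ t' : ℕ → ℕ, IsPolicy n t' → distortionUB c t ≤ distortionUB c t'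

/-- The parameter `r = ⌊ln 4 / c⌋` of the Aurelian policy. -/
noncomputable def aurelianR (c : ℝ) : ℕ := ⌊Real.log 4 / c⌋₊

/-- The maximal transmitted index `q_n = ⌊√(2n/r + 1/4) − 1/2⌋` of the Aurelian policy. -/
noncomputable def aurelianQ (c : ℝ) (n : ℕ) : ℕ :=
  ⌊Real.sqrt (2 * n / (aurelianR c : ℝ) + 1 / 4) - 1 / 2⌋₊

/-- The Aurelian pattern: bit `k` is transmitted `(q_n − k + 1)·r` times for
`1 ≤ k ≤ q_n`, and never for `k > q_n`. -/
noncomputable def aurelian (c : ℝ) (n : ℕ) : ℕ → ℕ := fun k =>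
  if 1 ≤ k ∧ k ≤ aurelianQ c n then (aurelianQ c n - k + 1) * aurelianR c else 0

namespace Aux16

/-- the generic term of the distortion sums -/
noncomputable def term (d : ℝ) (t : ℕ → ℕ) (k : ℕ) : ℝ :=
  (4 : ℝ)⁻¹ ^ (k + 1) * Real.exp (-(t (k + 1) : ℝ) * d)

lemma term_pos (d : ℝ) (t : ℕ → ℕ) (k : ℕ) : 0 < term d t k :=
  mul_pos (pow_pos (by norm_num) _) (Real.exp_pos _)

lemma term_le (d : ℝ) (hd : 0 ≤ d) (t : ℕ → ℕ) (k : ℕ) :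
    term d t k ≤ (4 : ℝ)⁻¹ ^ (k + 1) := by
  have h1 : Real.exp (-(t (k + 1) : ℝ) * d) ≤ 1 := by
    rw [Real.exp_le_one_iff]
    have : (0:ℝ) ≤ (t (k+1) : ℝ) := Nat.cast_nonneg _
    nlinarith
  calc term d t k ≤ (4 : ℝ)⁻¹ ^ (k + 1) * 1 := by
        exact mul_le_mul_of_nonneg_left h1 (by positivity)
    _ = _ := by ring

lemma summable_quarter : Summable (fun k : ℕ => (4 : ℝ)⁻¹ ^ (k + 1)) := by
  have := summable_geometric_of_lt_one (r := (4:ℝ)⁻¹) (by norm_num) (by norm_num)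
  have h2 := this.mul_right (4:ℝ)⁻¹
  have : (fun k : ℕ => (4 : ℝ)⁻¹ ^ (k + 1)) = fun k : ℕ => (4:ℝ)⁻¹ ^ k * (4:ℝ)⁻¹ := by
    funext k; rw [pow_succ]
  rw [this]; exact h2

lemma tsum_quarter : ∑' k : ℕ, (4 : ℝ)⁻¹ ^ (k + 1) = 1 / 3 := by
  have h : ∑' k : ℕ, (4 : ℝ)⁻¹ ^ (k + 1) = (∑' k : ℕ, (4 : ℝ)⁻¹ ^ k) * (4:ℝ)⁻¹ := by
    rw [← tsum_mul_right]
    exact tsum_congr fun k => pow_succ _ _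
  rw [h, tsum_geometric_of_lt_one (by norm_num) (by norm_num)]
  norm_num

lemma summable_term (d : ℝ) (hd : 0 ≤ d) (t : ℕ → ℕ) : Summable (term d t) :=
  Summable.of_nonneg_of_le (fun k => (term_pos d t k).le) (term_le d hd t) summable_quarter

lemma tsum_term_pos (d : ℝ) (hd : 0 ≤ d) (t : ℕ → ℕ) : 0 < ∑' k, term d t k :=
  Summable.tsum_pos (summable_term d hd t) (fun k => (term_pos d t k).le) 0 (term_pos d t 0)

lemma tsum_term_le_third (d : ℝ) (hd : 0 ≤ d) (t : ℕ → ℕ) :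
    ∑' k, term d t k ≤ 1 / 3 := by
  rw [← tsum_quarter]
  exact Summable.tsum_le_tsum (term_le d hd t) (summable_term d hd t) summable_quarter

lemma distortionUB_eq (c : ℝ) (t : ℕ → ℕ) : distortionUB c t = ∑' k, term c t k := rfl

lemma distortionLB_eq (b : ℝ) (t : ℕ → ℕ) : distortionLB b t = (1/4) * ∑' k, term b t k := rfl

lemma distortionLB_pos (b : ℝ) (hb : 0 ≤ b) (t : ℕ → ℕ) : 0 < distortionLB b t := by
  rw [distortionLB_eq]
  have := tsum_term_pos b hb t
  linarith

/-- Exchange argument: moving one transmission from bit `j` (with `t j ≥ 1`) to bit `i`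
cannot decrease the distortion of an efficient policy. -/
lemma exchange {c : ℝ} (hc : 0 < c) {n : ℕ} {t : ℕ → ℕ} (ht : IsEfficient c n t)
    {i j : ℕ} (hi : 1 ≤ i) (hj : 1 ≤ j) (hij : i ≠ j) (hjpos : 1 ≤ t j) :
    (4:ℝ)⁻¹ ^ i * Real.exp (-(t i : ℝ) * c) ≤ (4:ℝ)⁻¹ ^ j * Real.exp (-((t j : ℝ) - 1) * c) := by
  classical
  set t' : ℕ → ℕ := fun k => if k = i then t i + 1 else if k = j then t j - 1 else t k with ht'
  have hpol' : IsPolicy n t' := by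
    unfold IsPolicy
    have key : ∀ k : ℕ, (t (k+1) : ENNReal) + (if k + 1 = i then 1 else 0)
        = (t' (k+1) : ENNReal) + (if k + 1 = j then 1 else 0) := by
      intro k
      by_cases h1 : k + 1 = i
      · subst h1
        rw [if_pos rfl, if_neg (by omega), ht']
        simp only [if_pos rfl]
        push_cast
        ring
      · rw [if_neg h1]
        by_cases h2 : k + 1 = j
        · subst h2
          rw [if_pos rfl, ht']
          simp only [if_neg h1, if_pos rfl]
          rw [add_zero]
          have h3 : t (k+1) = t (k+1) - 1 + 1 := by omega
          exact_mod_cast congrArg (fun z : ℕ => (z : ENNReal)) h3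
        · rw [if_neg h2, ht']
          simp only [if_neg h1, if_neg h2]
    have hsum := tsum_congr (L := SummationFilter.unconditional ℕ) key
    rw [ENNReal.tsum_add, ENNReal.tsum_add] at hsum
    have hii : (∑' k : ℕ, (if k + 1 = i then (1:ENNReal) else 0)) = 1 := by
      rw [tsum_eq_single (i - 1) (fun k hk => if_neg (by omega))]
      exact if_pos (by omega)
    have hjj : (∑' k : ℕ, (if k + 1 = j then (1:ENNReal) else 0)) = 1 := by
      rw [tsum_eq_single (j - 1) (fun k hk => if_neg (by omega))]
      exact if_pos (by omega)
    rw [hii, hjj, ht.1] at hsum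
    rw [add_comm ((n:ENNReal)) 1, add_comm (∑' (k : ℕ), (t' (k+1) : ENNReal)) 1] at hsum
    exact ((ENNReal.add_right_inj (by simp)).mp hsum.symm)
  have hU := ht.2 t' hpol'
  rw [distortionUB_eq, distortionUB_eq] at hU
  have hsumt := summable_term c hc.le t
  have hsumt' := summable_term c hc.le t'
  have hdiff : 0 ≤ ∑' k, (term c t' k - term c t k) := by
    rw [Summable.tsum_sub hsumt' hsumt]; linarith
  have hzero : ∀ k : ℕ, k ∉ ({i - 1, j - 1} : Finset ℕ) → term c t' k - term c t k = 0 := by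
    intro k hk
    simp only [Finset.mem_insert, Finset.mem_singleton] at hk
    push_neg at hk
    have : t' (k + 1) = t (k + 1) := by
      rw [ht']; simp only
      rw [if_neg (by omega), if_neg (by omega)]
    rw [term, term, this, sub_self]
  rw [tsum_eq_sum hzero, Finset.sum_pair (by omega : i - 1 ≠ j - 1)] at hdiff
  have hi1 : i - 1 + 1 = i := by omega
  have hj1 : j - 1 + 1 = j := by omega
  have hti' : t' i = t i + 1 := by rw [ht']; simp
  have htj' : t' j = t j - 1 := by rw [ht']; simp [Ne.symm hij]
  simp only [term] at hdiff
  rw [hi1, hj1, hti', htj'] at hdiff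
  have hcastj : ((t j - 1 : ℕ) : ℝ) = (t j : ℝ) - 1 := by
    rw [Nat.cast_sub hjpos]; norm_num
  have hcasti : ((t i + 1 : ℕ) : ℝ) = (t i : ℝ) + 1 := by push_cast; ring
  rw [hcastj, hcasti] at hdiff
  set P : ℝ := (4:ℝ)⁻¹ ^ i with hP
  set Q : ℝ := (4:ℝ)⁻¹ ^ j with hQ
  set x : ℝ := Real.exp (-(t i : ℝ) * c) with hx
  set y : ℝ := Real.exp (-(t j : ℝ) * c) with hy
  have e1 : Real.exp (-((t i : ℝ) + 1) * c) = x * Real.exp (-c) := by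
    rw [hx, ← Real.exp_add]; ring_nf
  have e2 : Real.exp (-((t j : ℝ) - 1) * c) = y * Real.exp c := by
    rw [hy, ← Real.exp_add]; ring_nf
  rw [e1, e2] at hdiff
  rw [e2]
  have hP0 : 0 < P := pow_pos (by norm_num) _
  have hQ0 : 0 < Q := pow_pos (by norm_num) _
  have hx0 : 0 < x := Real.exp_pos _
  have hy0 : 0 < y := Real.exp_pos _
  have hec : 1 < Real.exp c := by
    calc (1:ℝ) = Real.exp 0 := by simp
    _ < Real.exp c := Real.exp_lt_exp.2 hc
  have hee : Real.exp (-c) * Real.exp c = 1 := by rw [← Real.exp_add]; simp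
  have h4 : P * x - P * x * Real.exp (-c) ≤ Q * y * Real.exp c - Q * y := by linarith
  have h5 := mul_le_mul_of_nonneg_right h4 (Real.exp_pos c).le
  have hee2 : P * x * Real.exp (-c) * Real.exp c = P * x := by
    calc P * x * Real.exp (-c) * Real.exp c = P * x * (Real.exp (-c) * Real.exp c) := by ring
    _ = P * x := by rw [hee, mul_one]
  have h6 : P * x * (Real.exp c - 1) ≤ (Q * (y * Real.exp c)) * (Real.exp c - 1) := by
    ring_nf at h5 ⊢
    ring_nf at hee2
    linarith
  exact le_of_mul_le_mul_right h6 (by linarith)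


lemma log4_pos : (0:ℝ) < Real.log 4 := Real.log_pos (by norm_num)

lemma quarter_pow (k : ℕ) : (4:ℝ)⁻¹ ^ k = Real.exp (-((k:ℝ) * Real.log 4)) := by
  have h4 : (4:ℝ)⁻¹ = Real.exp (-Real.log 4) := by
    rw [Real.exp_neg, Real.exp_log (by norm_num : (0:ℝ) < 4)]
  rw [h4, ← Real.exp_nat_mul]
  congr 1; ring

lemma log_term (z : ℝ) (i : ℕ) :
    Real.log ((4:ℝ)⁻¹ ^ i * Real.exp z) = -((i:ℝ) * Real.log 4) + z := by
  rw [quarter_pow, ← Real.exp_add, Real.log_exp]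

lemma exchange_log {c : ℝ} (hc : 0 < c) {n : ℕ} {t : ℕ → ℕ} (ht : IsEfficient c n t)
    {i j : ℕ} (hi : 1 ≤ i) (hj : 1 ≤ j) (hij : i ≠ j) (hjpos : 1 ≤ t j) :
    (j:ℝ) * Real.log 4 + ((t j : ℝ) - 1) * c ≤ (i:ℝ) * Real.log 4 + (t i : ℝ) * c := by
  have h := exchange hc ht hi hj hij hjpos
  have h1 := Real.log_le_log (mul_pos (pow_pos (by norm_num) i) (Real.exp_pos _)) h
  rw [log_term, log_term] at h1
  linarith

/-- if `t M ≥ 1` for an efficient policy, then `t j` is large for all `j ≤ M`. -/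
lemma receiver_bound {c : ℝ} (hc : 0 < c) {n : ℕ} {t : ℕ → ℕ} (ht : IsEfficient c n t)
    {M : ℕ} (hM : 1 ≤ M) (hMpos : 1 ≤ t M) {j : ℕ} (hj : 1 ≤ j) :
    ((M:ℝ) - (j:ℝ)) * Real.log 4 ≤ (t j : ℝ) * c := by
  rcases eq_or_ne j M with rfl | hne
  · simp only [sub_self, zero_mul]
    positivity
  · have h := exchange_log hc ht hj hM hne hMpos
    have : (1:ℝ) ≤ (t M : ℝ) := by exact_mod_cast hMpos
    nlinarith

/-- if `t j ≥ 1` and `t i = 0` for an efficient policy then `t j` is bounded. -/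
lemma donor_bound {c : ℝ} (hc : 0 < c) {n : ℕ} {t : ℕ → ℕ} (ht : IsEfficient c n t)
    {i j : ℕ} (hi : 1 ≤ i) (hj : 1 ≤ j) (hij : i ≠ j) (hi0 : t i = 0) (hjpos : 1 ≤ t j) :
    ((t j : ℝ) - 1) * c ≤ ((i:ℝ) - (j:ℝ)) * Real.log 4 := by
  have h := exchange_log hc ht hi hj hij hjpos
  rw [hi0] at h
  push_cast at h
  nlinarith

lemma sum_le_of_policy {n : ℕ} {t : ℕ → ℕ} (h : IsPolicy n t) (m : ℕ) :
    (∑ k ∈ Finset.range m, (t (k+1) : ℝ)) ≤ (n:ℝ) := by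
  have h1 : (∑ k ∈ Finset.range m, (t (k+1) : ENNReal)) ≤ (n : ENNReal) := by
    rw [← h]
    exact Summable.sum_le_tsum _ (fun _ _ => zero_le) ENNReal.summable
  have h2 : ((∑ k ∈ Finset.range m, t (k+1) : ℕ) : ENNReal) ≤ (n : ENNReal) := by
    push_cast
    exact h1
  have h3 : (∑ k ∈ Finset.range m, t (k+1)) ≤ n := by exact_mod_cast h2
  calc (∑ k ∈ Finset.range m, (t (k+1) : ℝ)) = ((∑ k ∈ Finset.range m, t (k+1) : ℕ) : ℝ) := by
        push_cast; ring
  _ ≤ (n:ℝ) := by exact_mod_cast h3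

lemma gauss (m : ℕ) : (∑ k ∈ Finset.range m, (k:ℝ)) = m * (m-1) / 2 := by
  induction m with
  | zero => simp
  | succ p ih => rw [Finset.sum_range_succ, ih]; push_cast; ring

lemma gauss' (m : ℕ) : (∑ k ∈ Finset.range m, ((m:ℝ) - (k+1))) = m * (m-1) / 2 := by
  rw [Finset.sum_sub_distrib]
  simp only [Finset.sum_const, Finset.card_range, nsmul_eq_mul, Finset.sum_add_distrib]
  rw [gauss]
  push_cast
  ring

/-- counting: if `t M ≥ 1` for an efficient policy of length n, then `n` is large. -/
lemma counting {c : ℝ} (hc : 0 < c) {n : ℕ} {t : ℕ → ℕ} (ht : IsEfficient c n t)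
    {M : ℕ} (hM : 1 ≤ M) (hMpos : 1 ≤ t M) :
    Real.log 4 * (M * (M-1)) / 2 ≤ (n:ℝ) * c := by
  have h1 : ∀ k ∈ Finset.range M, ((M:ℝ) - (k+1)) * Real.log 4 ≤ (t (k+1) : ℝ) * c := by
    intro k _
    have := receiver_bound hc ht hM hMpos (j := k+1) (by omega)
    push_cast at this ⊢
    convert this using 2
  have h2 := Finset.sum_le_sum h1
  rw [← Finset.sum_mul, ← Finset.sum_mul, gauss'] at h2
  have h3 := sum_le_of_policy ht.1 M
  have h4 := mul_le_mul_of_nonneg_right h3 hc.le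
  calc Real.log 4 * (M * ((M:ℝ)-1)) / 2 = (M:ℝ) * ((M:ℝ)-1)/2 * Real.log 4 := by ring
  _ ≤ (∑ k ∈ Finset.range M, (t (k+1) : ℝ)) * c := h2
  _ ≤ (n:ℝ) * c := h4


lemma tsum_le_aux {d : ℝ} (hd : 0 < d) (t : ℕ → ℕ) (M : ℕ) {μ : ℝ} (hμ0 : 0 ≤ μ)
    (hμ : μ ≤ Real.log 4)
    (h : ∀ k < M, μ * M ≤ ((k:ℝ)+1) * Real.log 4 + (t (k+1) : ℝ) * d) :
    ∑' k, term d t k ≤ ((M:ℝ)+1) * Real.exp (-(μ * M)) := by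
  have hsum := summable_term d hd.le t
  have htail : Summable fun k => term d t (k + M) := (summable_nat_add_iff M).2 hsum
  rw [← Summable.sum_add_tsum_nat_add' htail]
  have part1 : (∑ k ∈ Finset.range M, term d t k) ≤ (M:ℝ) * Real.exp (-(μ * M)) := by
    have hb : ∀ k ∈ Finset.range M, term d t k ≤ Real.exp (-(μ * M)) := by
      intro k hk
      rw [Finset.mem_range] at hk
      rw [term, quarter_pow, ← Real.exp_add, Real.exp_le_exp]
      have := h k hk
      push_cast
      nlinarith [this]
    calc (∑ k ∈ Finset.range M, term d t k) ≤ (Finset.range M).card • Real.exp (-(μ * M)) :=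
          Finset.sum_le_card_nsmul _ _ _ hb
    _ = (M:ℝ) * Real.exp (-(μ * M)) := by
      rw [Finset.card_range, nsmul_eq_mul]
  have part2 : (∑' k, term d t (k + M)) ≤ Real.exp (-(μ * M)) := by
    have hle : ∀ k : ℕ, term d t (k + M) ≤ (4:ℝ)⁻¹ ^ M * (4:ℝ)⁻¹ ^ (k+1) := by
      intro k
      have := term_le d hd.le t (k + M)
      calc term d t (k + M) ≤ (4:ℝ)⁻¹ ^ (k + M + 1) := this
      _ = (4:ℝ)⁻¹ ^ M * (4:ℝ)⁻¹ ^ (k+1) := by rw [← pow_add]; congr 1; omega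
    have hsum2 : Summable fun k : ℕ => (4:ℝ)⁻¹ ^ M * (4:ℝ)⁻¹ ^ (k+1) :=
      summable_quarter.mul_left _
    calc (∑' k, term d t (k + M)) ≤ ∑' k : ℕ, (4:ℝ)⁻¹ ^ M * (4:ℝ)⁻¹ ^ (k+1) :=
          Summable.tsum_le_tsum hle htail hsum2
    _ = (4:ℝ)⁻¹ ^ M * (1/3) := by rw [tsum_mul_left, tsum_quarter]
    _ ≤ (4:ℝ)⁻¹ ^ M := by
        have : (0:ℝ) < (4:ℝ)⁻¹ ^ M := pow_pos (by norm_num) _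
        linarith
    _ = Real.exp (-((M:ℝ) * Real.log 4)) := quarter_pow M
    _ ≤ Real.exp (-(μ * M)) := by
        rw [Real.exp_le_exp]
        have hM0 : (0:ℝ) ≤ (M:ℝ) := Nat.cast_nonneg _
        nlinarith
  calc (∑ k ∈ Finset.range M, term d t k) + (∑' k, term d t (k + M))
      ≤ (M:ℝ) * Real.exp (-(μ * M)) + Real.exp (-(μ * M)) := add_le_add part1 part2
  _ = ((M:ℝ)+1) * Real.exp (-(μ * M)) := by ring

lemma aurelianR_one_le {c : ℝ} (hc : 0 < c) (hc' : c ≤ Real.log 4) : 1 ≤ aurelianR c := by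
  apply Nat.le_floor
  rw [Nat.cast_one, le_div_iff₀ hc]
  linarith

lemma aurelianR_mul_le {c : ℝ} (hc : 0 < c) : (aurelianR c : ℝ) * c ≤ Real.log 4 := by
  have := Nat.floor_le (R := ℝ) (a := Real.log 4 / c) (by positivity)
  calc (aurelianR c : ℝ) * c ≤ (Real.log 4 / c) * c := by
        apply mul_le_mul_of_nonneg_right this hc.le
  _ = Real.log 4 := by field_simp

lemma U_le {c : ℝ} (hc : 0 < c) (hc' : c ≤ Real.log 4) (n : ℕ) :
    distortionUB c (aurelian c n)
      ≤ ((aurelianQ c n : ℝ) + 1) * Real.exp (-(((aurelianR c : ℝ) * c) * aurelianQ c n)) := by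
  set q := aurelianQ c n
  set r := aurelianR c
  rw [distortionUB_eq]
  apply tsum_le_aux hc _ q (by positivity) (aurelianR_mul_le hc)
  intro k hk
  have hval : aurelian c n (k+1) = (q - k) * r := by
    rw [aurelian, if_pos ⟨by omega, by omega⟩]
    congr 1
    omega
  rw [hval]
  have hcast : (((q - k) * r : ℕ) : ℝ) = ((q:ℝ) - k) * r := by
    push_cast [Nat.cast_sub hk.le]
    ring
  rw [hcast]
  have h1 : (r:ℝ) * c ≤ Real.log 4 := aurelianR_mul_le hc
  have h2 : (0:ℝ) ≤ (r:ℝ) * c := by positivity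
  have h3 : (0:ℝ) ≤ (k:ℝ) := Nat.cast_nonneg _
  nlinarith [mul_nonneg h3 (sub_nonneg.2 h1)]


lemma U_pos (c : ℝ) (hc : 0 < c) (t : ℕ → ℕ) : 0 < distortionUB c t := by
  rw [distortionUB_eq]; exact tsum_term_pos c hc.le t

lemma logU_le {c : ℝ} (hc : 0 < c) (hc' : c ≤ Real.log 4) (n : ℕ) :
    Real.log (distortionUB c (aurelian c n))
      ≤ Real.log ((aurelianQ c n : ℝ) + 1) - ((aurelianR c : ℝ) * c) * aurelianQ c n := by
  have h1 := Real.log_le_log (U_pos c hc _) (U_le hc hc' n)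
  rw [Real.log_mul (by positivity) (Real.exp_ne_zero _), Real.log_exp] at h1
  linarith

/-- the tail vanishing of efficient policies -/
lemma zero_tail {c : ℝ} (hc : 0 < c) {n : ℕ} (hn : 1 ≤ n) {t : ℕ → ℕ}
    (ht : IsEfficient c n t) {j : ℕ}
    (hj : Real.sqrt (2 * n * c / Real.log 4) + 1 < (j:ℝ)) : t j = 0 := by
  by_contra h0
  set x := Real.sqrt (2 * n * c / Real.log 4) with hx
  have hx0 : 0 ≤ x := Real.sqrt_nonneg _
  have hj1 : 1 ≤ j := by
    by_contra h; push_neg at h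
    interval_cases j <;> simp_all <;> linarith
  have hcount := counting hc ht hj1 (Nat.one_le_iff_ne_zero.2 h0)
  have hxsq : x ^ 2 = 2 * n * c / Real.log 4 := Real.sq_sqrt (by positivity)
  have hlog4 := log4_pos
  have hj2 : x + 1 < (j:ℝ) := hj
  have ha : x < (j:ℝ) - 1 := by linarith
  have hb' : x * x ≤ ((j:ℝ) - 1) * (j:ℝ) := by nlinarith
  have hc2 : x * x = 2 * n * c / Real.log 4 := by
    have := Real.mul_self_sqrt (by positivity : (0:ℝ) ≤ 2 * n * c / Real.log 4)
    rw [← hx] at this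
    linarith [this]
  have hjn : 2 ≤ j := by
    have h1 : (1:ℝ) < (j:ℝ) := by linarith
    have h2 : 1 < j := by exact_mod_cast h1
    omega
  have hj3 : (1:ℝ) ≤ (j:ℝ) - 1 := by
    have : (2:ℝ) ≤ (j:ℝ) := by exact_mod_cast hjn
    linarith
  have hq : x * x < ((j:ℝ)-1) * ((j:ℝ)-1) := by nlinarith
  have hq2 : ((j:ℝ)-1)*((j:ℝ)-1) ≤ (j:ℝ)*((j:ℝ)-1) := by nlinarith
  have hd2 : 2 * (n:ℝ) * c < Real.log 4 * (((j:ℝ)) * ((j:ℝ) - 1)) := by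
    have h5 : 2 * (n:ℝ) * c = Real.log 4 * (x * x) := by
      rw [hc2]; field_simp
    have h6 := mul_lt_mul_of_pos_left hq hlog4
    have h7 := mul_le_mul_of_nonneg_left hq2 hlog4.le
    linarith
  linarith

lemma exists_M {c : ℝ} (hc : 0 < c) {n : ℕ} (hn : 1 ≤ n) {t : ℕ → ℕ}
    (ht : IsEfficient c n t) :
    ∃ M : ℕ, 1 ≤ M ∧ 1 ≤ t M ∧ (∀ j, M < j → 1 ≤ j → t j = 0) := by
  classical
  set x := Real.sqrt (2 * n * c / Real.log 4) with hx
  set m : ℕ := ⌊x⌋₊ + 2 with hm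
  have hsupp : ∀ j : ℕ, 1 ≤ j → 1 ≤ t j → j ≤ m := by
    intro j hj1 hj2
    by_contra h; push_neg at h
    have : x + 1 < (j:ℝ) := by
      have h1 : (m:ℝ) ≤ (j:ℝ) - 1 := by
        have : m + 1 ≤ j := h
        exact_mod_cast Nat.le_sub_one_of_lt h
      have h2 : x < (⌊x⌋₊:ℝ) + 1 := Nat.lt_floor_add_one x
      have h3 : (m:ℝ) = (⌊x⌋₊:ℝ) + 2 := by exact_mod_cast rfl
      linarith
    have := zero_tail hc hn ht this
    omega
  set Fs := (Finset.range (m+1)).filter (fun j => 1 ≤ j ∧ 1 ≤ t j) with hFs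
  have hne : Fs.Nonempty := by
    by_contra h
    rw [Finset.not_nonempty_iff_eq_empty] at h
    have hall : ∀ j : ℕ, 1 ≤ j → t j = 0 := by
      intro j hj
      by_contra h0
      have h1 : 1 ≤ t j := Nat.one_le_iff_ne_zero.2 h0
      have h2 : j ∈ Fs := by
        rw [hFs, Finset.mem_filter, Finset.mem_range]
        exact ⟨by have := hsupp j hj h1; omega, hj, h1⟩
      rw [h] at h2
      exact absurd h2 (Finset.notMem_empty j)
    have : (∑' k : ℕ, (t (k + 1) : ENNReal)) = 0 := by
      convert tsum_zero with k
      rw [hall (k+1) (by omega)]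
      simp
    rw [ht.1] at this
    simp at this
    omega
  have key : ∀ j ∈ Fs, 1 ≤ j ∧ 1 ≤ t j ∧ j ≤ m := by
    intro j hj
    simp only [hFs, Finset.mem_filter, Finset.mem_range] at hj
    exact ⟨hj.2.1, hj.2.2, by omega⟩
  refine ⟨Fs.max' hne, (key _ (Fs.max'_mem hne)).1, (key _ (Fs.max'_mem hne)).2.1, ?_⟩
  intro j hj hj1
  by_contra h0
  have h1 : 1 ≤ t j := Nat.one_le_iff_ne_zero.2 h0
  have h2 : j ∈ Fs := by
    rw [hFs, Finset.mem_filter, Finset.mem_range]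
    exact ⟨by have := hsupp j hj1 h1; omega, hj1, h1⟩
  have := Finset.le_max' Fs j h2
  omega

lemma gauss'' (M : ℕ) : (∑ k ∈ Finset.range M, ((M:ℝ) - k)) = M * (M+1) / 2 := by
  rw [Finset.sum_sub_distrib]
  simp only [Finset.sum_const, Finset.card_range, nsmul_eq_mul]
  rw [gauss]
  ring

lemma policy_eq_sum {n : ℕ} {t : ℕ → ℕ} (hpol : IsPolicy n t) {M : ℕ}
    (htop : ∀ j, M < j → 1 ≤ j → t j = 0) :
    (n:ℝ) = ∑ k ∈ Finset.range M, (t (k+1) : ℝ) := by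
  have hpol' : (∑' k : ℕ, (t (k + 1) : ENNReal)) = n := hpol
  have h1 : (∑' k : ℕ, (t (k + 1) : ENNReal)) = ∑ k ∈ Finset.range M, (t (k+1) : ENNReal) := by
    apply tsum_eq_sum
    intro k hk
    rw [Finset.mem_range] at hk
    rw [htop (k+1) (by omega) (by omega)]
    simp
  have h2 : (n : ENNReal) = ((∑ k ∈ Finset.range M, t (k+1) : ℕ) : ENNReal) := by
    rw [← hpol', h1]
    push_cast
    rfl
  have h3 : n = ∑ k ∈ Finset.range M, t (k+1) := by exact_mod_cast h2
  rw [h3]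
  push_cast
  rfl

lemma M_lower {c : ℝ} (hc : 0 < c) (hc' : c ≤ Real.log 4) {n : ℕ} (hn : 1 ≤ n) {t : ℕ → ℕ}
    (ht : IsEfficient c n t) {M : ℕ} (hM1 : 1 ≤ M) (hMpos : 1 ≤ t M)
    (htop : ∀ j, M < j → 1 ≤ j → t j = 0) :
    Real.sqrt (c / (2 * Real.log 4)) * Real.sqrt n ≤ (M:ℝ) := by
  have hlog4 := log4_pos
  -- upper bound on each t j
  have hup : ∀ k ∈ Finset.range M, (t (k+1) : ℝ) * c ≤ c + ((M:ℝ) - k) * Real.log 4 := by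
    intro k hk
    rw [Finset.mem_range] at hk
    rcases Nat.eq_zero_or_pos (t (k+1)) with h0 | h1
    · rw [h0]
      have : (0:ℝ) ≤ ((M:ℝ) - k) * Real.log 4 := by
        apply mul_nonneg _ hlog4.le
        have : (k:ℝ) ≤ (M:ℝ) := by exact_mod_cast hk.le
        linarith
      simp only [Nat.cast_zero, zero_mul]
      linarith
    · have hzero : t (M+1) = 0 := htop (M+1) (by omega) (by omega)
      have := donor_bound hc ht (i := M+1) (j := k+1) (by omega) (by omega) (by omega) hzero h1
      have hcast : ((M+1:ℕ):ℝ) - ((k+1:ℕ):ℝ) = (M:ℝ) - k := by push_cast; ring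
      push_cast at this
      nlinarith
  have hsum := Finset.sum_le_sum hup
  rw [← Finset.sum_mul] at hsum
  have heq := policy_eq_sum ht.1 htop
  have hsplit : (∑ k ∈ Finset.range M, (c + ((M:ℝ) - k) * Real.log 4))
      = (M:ℝ) * c + (M * (M+1) / 2) * Real.log 4 := by
    rw [Finset.sum_add_distrib, ← Finset.sum_mul, gauss'', Finset.sum_const,
      Finset.card_range, nsmul_eq_mul]
  rw [hsplit, ← heq] at hsum
  have hM1' : (1:ℝ) ≤ (M:ℝ) := by exact_mod_cast hM1
  have hM1' : (1:ℝ) ≤ (M:ℝ) := by exact_mod_cast hM1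
  have hint1 : (0:ℝ) ≤ (M:ℝ) * ((M:ℝ) - 1) * Real.log 4 :=
    mul_nonneg (mul_nonneg (Nat.cast_nonneg M) (by linarith)) hlog4.le
  have hint2 : (M:ℝ) * c ≤ (M:ℝ) * Real.log 4 :=
    mul_le_mul_of_nonneg_left hc' (Nat.cast_nonneg M)
  have e1 : (M:ℝ) * c ≤ (M:ℝ)^2 * Real.log 4 := by nlinarith
  have e2 : ((M:ℝ) * ((M:ℝ)+1) / 2) * Real.log 4 ≤ (M:ℝ)^2 * Real.log 4 := by nlinarith
  have h9 : (n:ℝ) * c ≤ 2 * Real.log 4 * (M:ℝ)^2 := by linarith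
  have h10 : c / (2 * Real.log 4) * (n:ℝ) ≤ (M:ℝ)^2 := by
    rw [div_mul_eq_mul_div, div_le_iff₀ (by positivity)]
    nlinarith
  calc Real.sqrt (c / (2 * Real.log 4)) * Real.sqrt n
      = Real.sqrt (c / (2 * Real.log 4) * n) := (Real.sqrt_mul (by positivity) _).symm
  _ ≤ Real.sqrt ((M:ℝ)^2) := Real.sqrt_le_sqrt h10
  _ = (M:ℝ) := Real.sqrt_sq (Nat.cast_nonneg _)


lemma log_le_two_sqrt {z : ℝ} (hz : 0 < z) : Real.log z ≤ 2 * Real.sqrt z := by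
  have h1 : Real.log (Real.sqrt z) ≤ Real.sqrt z - 1 :=
    Real.log_le_sub_one_of_pos (Real.sqrt_pos.2 hz)
  have h2 : Real.log (Real.sqrt z) = Real.log z / 2 := Real.log_sqrt hz.le
  linarith

lemma one_le_sqrt {n : ℕ} (hn : 1 ≤ n) : (1:ℝ) ≤ Real.sqrt n := by
  have h : Real.sqrt 1 ≤ Real.sqrt n := Real.sqrt_le_sqrt (by exact_mod_cast hn)
  rwa [Real.sqrt_one] at h

lemma logL_lt_zero {b : ℝ} (hb : 0 < b) (t : ℕ → ℕ) : Real.log (distortionLB b t) < 0 := by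
  apply Real.log_neg (distortionLB_pos b hb.le t)
  rw [distortionLB_eq]
  have := tsum_term_le_third b hb.le t
  linarith

lemma logL_ge {b : ℝ} (hb : 0 < b) {t : ℕ → ℕ} {m : ℕ} (hm : 1 ≤ m) (hzero : t m = 0) :
    -(((m:ℝ)+1) * Real.log 4) ≤ Real.log (distortionLB b t) := by
  have hm1 : m - 1 + 1 = m := by omega
  have hterm : term b t (m-1) = (4:ℝ)⁻¹ ^ m := by
    rw [term, hm1, hzero]
    simp
  have hle : (4:ℝ)⁻¹ ^ m ≤ ∑' k, term b t k := by
    rw [← hterm]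
    exact Summable.le_tsum (summable_term b hb.le t) (m-1) (fun j _ => (term_pos b t j).le)
  have hL : (4:ℝ)⁻¹ ^ (m+1) ≤ distortionLB b t := by
    rw [distortionLB_eq, pow_succ']
    have h4 : (0:ℝ) < (4:ℝ)⁻¹ := by norm_num
    calc (4:ℝ)⁻¹ * (4:ℝ)⁻¹ ^ m ≤ (4:ℝ)⁻¹ * ∑' k, term b t k := by
          apply mul_le_mul_of_nonneg_left hle h4.le
    _ = (1/4) * ∑' k, term b t k := by norm_num
  have := Real.log_le_log (pow_pos (by norm_num) (m+1)) hL
  rw [quarter_pow (m+1), Real.log_exp] at this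
  calc -(((m:ℝ)+1) * Real.log 4) = -((((m+1):ℕ):ℝ) * Real.log 4) := by push_cast; ring
  _ ≤ Real.log (distortionLB b t) := this

lemma sqrt_log4_eq {c : ℝ} (hc : 0 < c) (n : ℕ) :
    Real.sqrt (2 * n * c / Real.log 4) * Real.log 4
      = Real.sqrt (2 * c * Real.log 4) * Real.sqrt n := by
  have hlog4 := log4_pos
  rw [show Real.log 4 = Real.sqrt ((Real.log 4)^2) from (Real.sqrt_sq hlog4.le).symm]
  rw [← Real.sqrt_mul (by positivity)]
  rw [show Real.sqrt ((Real.log 4)^2) = Real.log 4 from Real.sqrt_sq hlog4.le]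
  rw [← Real.sqrt_mul (by positivity : (0:ℝ) ≤ 2 * c * Real.log 4)]
  congr 1
  field_simp

lemma logL_ge_main {c b : ℝ} (hc : 0 < c) (hb : 0 < b) {n : ℕ} (hn : 1 ≤ n)
    {t : ℕ → ℕ} (ht : IsEfficient c n t) :
    -(Real.sqrt (2 * c * Real.log 4) * Real.sqrt n + 3 * Real.log 4)
      ≤ Real.log (distortionLB b t) := by
  have hlog4 := log4_pos
  set x := Real.sqrt (2 * n * c / Real.log 4) with hx
  set m : ℕ := ⌊x⌋₊ + 2 with hm
  have hx0 : 0 ≤ x := Real.sqrt_nonneg _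
  have hmx : x + 1 < (m:ℝ) := by
    have h2 : x < (⌊x⌋₊:ℝ) + 1 := Nat.lt_floor_add_one x
    have h3 : (m:ℝ) = (⌊x⌋₊:ℝ) + 2 := by exact_mod_cast rfl
    linarith
  have hzero : t m = 0 := zero_tail hc hn ht hmx
  have h1 := logL_ge hb (show 1 ≤ m by omega) hzero
  have h2 : ((m:ℝ)+1) ≤ x + 3 := by
    have h3 : (m:ℝ) = (⌊x⌋₊:ℝ) + 2 := by exact_mod_cast rfl
    have h4 : (⌊x⌋₊:ℝ) ≤ x := Nat.floor_le hx0
    linarith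
  have h5 : ((m:ℝ)+1) * Real.log 4 ≤ (x + 3) * Real.log 4 :=
    mul_le_mul_of_nonneg_right h2 hlog4.le
  have h6 : (x + 3) * Real.log 4 = Real.sqrt (2 * c * Real.log 4) * Real.sqrt n + 3 * Real.log 4 := by
    rw [add_mul, sqrt_log4_eq hc]
  linarith

lemma q_up {c : ℝ} (hc : 0 < c) (hc' : c ≤ Real.log 4) {n : ℕ} (hn : 1 ≤ n) :
    (aurelianQ c n : ℝ) + 1 ≤ 3 * Real.sqrt n := by
  set r := aurelianR c with hr
  have hr1 : (1:ℝ) ≤ (r:ℝ) := by exact_mod_cast aurelianR_one_le hc hc'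
  set y := Real.sqrt (2 * n / (r:ℝ) + 1 / 4) with hy
  have hyhalf : (1/2:ℝ) ≤ y := by
    have h1 : Real.sqrt (1/4) ≤ y := Real.sqrt_le_sqrt
      (by have : (0:ℝ) ≤ 2 * n / (r:ℝ) := by positivity
          linarith)
    have h2 : Real.sqrt (1/4:ℝ) = 1/2 := by
      rw [show (1/4:ℝ) = (1/2)^2 by norm_num, Real.sqrt_sq (by norm_num)]
    linarith
  have hq : (aurelianQ c n : ℝ) ≤ y - 1/2 := Nat.floor_le (by linarith)
  have hy2 : y ≤ 2 * Real.sqrt n := by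
    have h1 : 2 * (n:ℝ) / (r:ℝ) ≤ 2 * n := div_le_self (by positivity) hr1
    have h2 : (1/4:ℝ) ≤ 2 * n := by
      have : (1:ℝ) ≤ (n:ℝ) := by exact_mod_cast hn
      linarith
    have h3 : y ≤ Real.sqrt (4 * n) := Real.sqrt_le_sqrt (by linarith)
    have h4 : Real.sqrt (4 * (n:ℝ)) = 2 * Real.sqrt n := by
      rw [show (4:ℝ) = 2^2 by norm_num, Real.sqrt_mul (by positivity), Real.sqrt_sq (by norm_num)]
    linarith
  have h5 := one_le_sqrt hn
  linarith

lemma q_low {c : ℝ} (hc : 0 < c) (hc' : c ≤ Real.log 4) (n : ℕ) :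
    Real.sqrt (2 * (aurelianR c : ℝ)) * c * Real.sqrt n - (3/2) * ((aurelianR c : ℝ) * c)
      ≤ ((aurelianR c : ℝ) * c) * (aurelianQ c n) := by
  set r := aurelianR c with hr
  have hr1 : (1:ℝ) ≤ (r:ℝ) := by exact_mod_cast aurelianR_one_le hc hc'
  set y := Real.sqrt (2 * n / (r:ℝ) + 1 / 4) with hy
  have hq1 : y - 3/2 ≤ (aurelianQ c n : ℝ) := by
    have := Nat.lt_floor_add_one (y - 1/2)
    have h0 : (aurelianQ c n : ℝ) = (⌊y - 1/2⌋₊ : ℝ) := by rw [aurelianQ]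
    linarith
  have h2 : Real.sqrt (2 * n / (r:ℝ)) ≤ y := Real.sqrt_le_sqrt (by linarith [Real.sqrt_nonneg (2 * (n:ℝ) / (r:ℝ))])
  have hkey : Real.sqrt (2 * n / (r:ℝ)) * ((r:ℝ) * c) = Real.sqrt (2 * (r:ℝ)) * c * Real.sqrt n := by
    have hrpos : (0:ℝ) < (r:ℝ) := by linarith
    have e1 : Real.sqrt (2 * n / (r:ℝ)) * (r:ℝ) = Real.sqrt (2 * (r:ℝ) * n) := by
      rw [show (r:ℝ) = Real.sqrt ((r:ℝ)^2) from (Real.sqrt_sq hrpos.le).symm]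
      rw [← Real.sqrt_mul (by positivity)]
      rw [show Real.sqrt ((r:ℝ)^2) = (r:ℝ) from Real.sqrt_sq hrpos.le]
      congr 1
      field_simp
    have e2 : Real.sqrt (2 * (r:ℝ) * n) = Real.sqrt (2 * (r:ℝ)) * Real.sqrt n :=
      Real.sqrt_mul (by positivity) _
    calc Real.sqrt (2 * n / (r:ℝ)) * ((r:ℝ) * c) = (Real.sqrt (2 * n / (r:ℝ)) * (r:ℝ)) * c := by ring
    _ = Real.sqrt (2 * (r:ℝ) * n) * c := by rw [e1]
    _ = Real.sqrt (2 * (r:ℝ)) * Real.sqrt n * c := by rw [e2]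
    _ = Real.sqrt (2 * (r:ℝ)) * c * Real.sqrt n := by ring
  have hrc0 : (0:ℝ) ≤ (r:ℝ) * c := by positivity
  have h3 : Real.sqrt (2 * n / (r:ℝ)) - 3/2 ≤ (aurelianQ c n : ℝ) := by linarith
  have h4 := mul_le_mul_of_nonneg_left h3 hrc0
  calc Real.sqrt (2 * (r:ℝ)) * c * Real.sqrt n - (3/2) * ((r:ℝ) * c)
      = ((r:ℝ) * c) * (Real.sqrt (2 * n / (r:ℝ)) - 3/2) := by rw [← hkey]; ring
  _ ≤ ((r:ℝ) * c) * (aurelianQ c n) := h4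

lemma logU_ge {c : ℝ} (hc : 0 < c) (n : ℕ) :
    -(Real.log 4 + ((aurelianR c : ℝ) * c) * (aurelianQ c n))
      ≤ Real.log (distortionUB c (aurelian c n)) := by
  set q := aurelianQ c n with hq
  set r := aurelianR c with hr
  set t := aurelian c n with htdef
  have ht1 : (t 1 : ℝ) ≤ (q:ℝ) * r := by
    rcases Nat.eq_zero_or_pos q with h0 | h1
    · have : t 1 = 0 := by rw [htdef, aurelian, if_neg (by omega)]
      rw [this, h0]
      simp
    · have : t 1 = q * r := by
        rw [htdef, aurelian, if_pos ⟨le_refl 1, h1⟩]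
        congr 1
        omega
      rw [this]
      push_cast
      ring_nf
      exact le_refl _
  have hterm : (4:ℝ)⁻¹ ^ (0+1) * Real.exp (-((q:ℝ) * r * c)) ≤ term c t 0 := by
    rw [term]
    apply mul_le_mul_of_nonneg_left _ (by positivity)
    rw [Real.exp_le_exp]
    nlinarith
  have hle : term c t 0 ≤ ∑' k, term c t k :=
    Summable.le_tsum (summable_term c hc.le t) 0 (fun j _ => (term_pos c t j).le)
  have hU : (4:ℝ)⁻¹ ^ 1 * Real.exp (-((q:ℝ) * r * c)) ≤ distortionUB c t := by
    rw [distortionUB_eq]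
    calc (4:ℝ)⁻¹ ^ 1 * Real.exp (-((q:ℝ) * r * c)) = (4:ℝ)⁻¹ ^ (0+1) * Real.exp (-((q:ℝ) * r * c)) := by norm_num
    _ ≤ term c t 0 := hterm
    _ ≤ _ := hle
  have := Real.log_le_log (by positivity) hU
  rw [log_term] at this
  push_cast at this
  linarith


lemma logL_le_main {c b : ℝ} (hc : 0 < c) (hc' : c ≤ Real.log 4) (hb : 0 < b) {n : ℕ}
    (hn : 1 ≤ n) {t : ℕ → ℕ} (ht : IsEfficient c n t) :
    ∃ M : ℕ, 1 ≤ M ∧ Real.sqrt (c / (2 * Real.log 4)) * Real.sqrt n ≤ (M:ℝ) ∧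
      Real.log (distortionLB b t)
        ≤ Real.log ((M:ℝ)+1) - (min (Real.log 4) (Real.log 4 * (b / c))) * M := by
  obtain ⟨M, hM1, hMpos, htop⟩ := exists_M hc hn ht
  refine ⟨M, hM1, M_lower hc hc' hn ht hM1 hMpos htop, ?_⟩
  set β := min (Real.log 4) (Real.log 4 * (b / c)) with hβ
  have hlog4 := log4_pos
  have hβpos : 0 < β := lt_min hlog4 (by positivity)
  have hβle : β ≤ Real.log 4 := min_le_left _ _
  have hsum : ∑' k, term b t k ≤ ((M:ℝ)+1) * Real.exp (-(β * M)) := by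
    apply tsum_le_aux hb t M hβpos.le hβle
    intro k hk
    have hrecv := receiver_bound hc ht hM1 hMpos (j := k+1) (by omega)
    push_cast at hrecv
    have hmk : (0:ℝ) ≤ (M:ℝ) - ((k:ℝ)+1) := by
      have : (k:ℝ) + 1 ≤ (M:ℝ) := by exact_mod_cast hk
      linarith
    have h1 := mul_le_mul_of_nonneg_right hrecv (by positivity : (0:ℝ) ≤ b / c)
    have h2 : β ≤ Real.log 4 * (b / c) := min_le_right _ _
    have h3 : ((M:ℝ) - ((k:ℝ)+1)) * β ≤ ((M:ℝ) - ((k:ℝ)+1)) * (Real.log 4 * (b / c)) :=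
      mul_le_mul_of_nonneg_left h2 hmk
    have h4 : ((k:ℝ)+1) * β ≤ ((k:ℝ)+1) * Real.log 4 :=
      mul_le_mul_of_nonneg_left hβle (by positivity)
    have h5 : (t (k+1) : ℝ) * c * (b / c) = (t (k+1) : ℝ) * b := by
      field_simp
    nlinarith [h1, h3, h4, h5]
  have hL : distortionLB b t ≤ ((M:ℝ)+1) * Real.exp (-(β * M)) := by
    rw [distortionLB_eq]
    have h0 : (0:ℝ) ≤ ∑' k, term b t k := (tsum_term_pos b hb.le t).le
    linarith
  have h6 := Real.log_le_log (distortionLB_pos b hb.le t) hL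
  rw [Real.log_mul (by positivity) (Real.exp_ne_zero _), Real.log_exp] at h6
  linarith

lemma sqrt_nat_tendsto : Filter.Tendsto (fun n : ℕ => Real.sqrt n) Filter.atTop Filter.atTop := by
  apply Filter.tendsto_atTop_atTop.2
  intro bb
  refine ⟨⌈bb^2⌉₊, fun n hn => ?_⟩
  have h1 : bb^2 ≤ (n:ℝ) := le_trans (Nat.le_ceil _) (by exact_mod_cast hn)
  have h2 : Real.sqrt (bb^2) ≤ Real.sqrt n := Real.sqrt_le_sqrt h1
  rw [Real.sqrt_sq_eq_abs] at h2
  exact le_trans (le_abs_self bb) h2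

lemma sqrt_sqrt_tendsto :
    Filter.Tendsto (fun n : ℕ => Real.sqrt (Real.sqrt n)) Filter.atTop Filter.atTop := by
  have h : Filter.Tendsto Real.sqrt Filter.atTop Filter.atTop := by
    apply Filter.tendsto_atTop_atTop.2
    intro bb
    refine ⟨bb^2, fun x hx => ?_⟩
    have h2 := Real.sqrt_le_sqrt hx
    rw [Real.sqrt_sq_eq_abs] at h2
    exact le_trans (le_abs_self bb) h2
  exact h.comp sqrt_nat_tendsto

end Aux16

/-- Corollary of the paper: with `A_1 = √(2 c ln 4)` and `A_2 = √(2r)·c`, for the Aurelian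
patterns `t^{(n)}` and any sequence `s^{(n)}` of efficient policies,
`liminf_{n→∞} ln(U_c(t^{(n)})) / ln(L_b(s^{(n)})) ≥ A_2/A_1 > 0`. -/
theorem stmt_16 (c b : ℝ) (hc : 0 < c) (hc' : c ≤ Real.log 4) (hb : 0 < b)
    (s : ℕ → ℕ → ℕ) (heff : ∀ n : ℕ, 1 ≤ n → IsEfficient c n (s n)) :
    Filter.liminf (fun n : ℕ =>
        Real.log (distortionUB c (aurelian c n)) / Real.log (distortionLB b (s n)))
        Filter.atTop
      ≥ (Real.sqrt (2 * aurelianR c) * c) / Real.sqrt (2 * c * Real.log 4) ∧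
    0 < (Real.sqrt (2 * aurelianR c) * c) / Real.sqrt (2 * c * Real.log 4) := by
  classical
  have hlog4 := Aux16.log4_pos
  set r := aurelianR c with hrdef
  have hr1 : (1:ℝ) ≤ (r:ℝ) := by exact_mod_cast Aux16.aurelianR_one_le hc hc'
  have hrc_le : (r:ℝ) * c ≤ Real.log 4 := Aux16.aurelianR_mul_le hc
  set A2 := Real.sqrt (2 * (r:ℝ)) * c with hA2
  set A1 := Real.sqrt (2 * c * Real.log 4) with hA1
  have hA2pos : 0 < A2 := by
    apply mul_pos _ hc
    apply Real.sqrt_pos.2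
    linarith
  have hA1pos : 0 < A1 := Real.sqrt_pos.2 (by positivity)
  have hratio : 0 < A2 / A1 := div_pos hA2pos hA1pos
  constructor
  swap
  · exact hratio
  set g : ℕ → ℝ := fun n =>
    Real.log (distortionUB c (aurelian c n)) / Real.log (distortionLB b (s n)) with hg
  set CC : ℝ := (3/2) * ((r:ℝ) * c) with hCC
  set ψ : ℕ → ℝ := fun n =>
    (A2 * Real.sqrt n - CC - 4 * Real.sqrt (Real.sqrt n))
      / (A1 * Real.sqrt n + 3 * Real.log 4) with hψ
  have hCC0 : 0 ≤ CC := by positivity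
  -- eventual pointwise bound ψ ≤ g
  have hψg : ∀ᶠ n in Filter.atTop, ψ n ≤ g n := by
    filter_upwards [Aux16.sqrt_sqrt_tendsto.eventually_ge_atTop ((4 + CC) / A2),
      Aux16.sqrt_sqrt_tendsto.eventually_ge_atTop 1,
      Filter.eventually_ge_atTop 1] with n hu1 hu2 hn1
    set u := Real.sqrt (Real.sqrt n) with hudef
    have husq : u * u = Real.sqrt n := Real.mul_self_sqrt (Real.sqrt_nonneg _)
    have h1 : 4 + CC ≤ A2 * u := by
      have := (div_le_iff₀ hA2pos).mp hu1
      linarith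
    have hN0 : 0 ≤ A2 * Real.sqrt n - CC - 4 * u := by
      nlinarith [mul_nonneg (sub_nonneg.2 h1) (le_trans zero_le_one hu2),
        mul_nonneg hCC0 (sub_nonneg.2 hu2), husq]
    have hq_up := Aux16.q_up hc hc' hn1
    have hq_low := Aux16.q_low hc hc' n
    have hlogU := Aux16.logU_le hc hc' n
    rw [← hrdef] at hq_low hlogU
    have hlogq : Real.log ((aurelianQ c n : ℝ) + 1) ≤ 4 * u := by
      have l1 : Real.log ((aurelianQ c n : ℝ) + 1)
          ≤ 2 * Real.sqrt ((aurelianQ c n : ℝ) + 1) :=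
        Aux16.log_le_two_sqrt (by positivity)
      have l2 : Real.sqrt ((aurelianQ c n : ℝ) + 1) ≤ Real.sqrt (4 * Real.sqrt n) :=
        Real.sqrt_le_sqrt (by linarith [Aux16.one_le_sqrt hn1])
      have l3 : Real.sqrt (4 * Real.sqrt n) = 2 * u := by
        rw [show (4:ℝ) = 2^2 by norm_num, Real.sqrt_mul (by positivity),
          Real.sqrt_sq (by norm_num)]
      linarith
    have hnumU : Real.log (distortionUB c (aurelian c n))
        ≤ -(A2 * Real.sqrt n - CC - 4 * u) := by
      rw [hA2, hCC]
      linarith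
    have hdenL := Aux16.logL_ge_main hc hb hn1 (heff n hn1)
    have hdenL0 := Aux16.logL_lt_zero hb (s n)
    have hD : 0 < A1 * Real.sqrt n + 3 * Real.log 4 := by positivity
    have hstep : (A2 * Real.sqrt n - CC - 4 * u) / (A1 * Real.sqrt n + 3 * Real.log 4)
        ≤ (-(Real.log (distortionUB c (aurelian c n))))
          / (-(Real.log (distortionLB b (s n)))) := by
      apply div_le_div₀ (by linarith) (by linarith) (by linarith) (by linarith)
    calc ψ n = (A2 * Real.sqrt n - CC - 4 * u) / (A1 * Real.sqrt n + 3 * Real.log 4) := rfl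
    _ ≤ (-(Real.log (distortionUB c (aurelian c n))))
          / (-(Real.log (distortionLB b (s n)))) := hstep
    _ = g n := by rw [neg_div_neg_eq]
  -- limit of ψ
  have hsqrtinv : Filter.Tendsto (fun n : ℕ => (Real.sqrt n)⁻¹) Filter.atTop (nhds 0) :=
    Aux16.sqrt_nat_tendsto.inv_tendsto_atTop
  have huinv : Filter.Tendsto (fun n : ℕ => (Real.sqrt (Real.sqrt n))⁻¹)
      Filter.atTop (nhds 0) :=
    Aux16.sqrt_sqrt_tendsto.inv_tendsto_atTop
  have htend0 : Filter.Tendsto (fun n : ℕ =>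
      (A2 - CC * (Real.sqrt n)⁻¹ - 4 * (Real.sqrt (Real.sqrt n))⁻¹)
        / (A1 + 3 * Real.log 4 * (Real.sqrt n)⁻¹)) Filter.atTop
      (nhds ((A2 - CC * 0 - 4 * 0) / (A1 + 3 * Real.log 4 * 0))) := by
    apply Filter.Tendsto.div
    · exact (tendsto_const_nhds.sub (hsqrtinv.const_mul CC)).sub (huinv.const_mul 4)
    · exact tendsto_const_nhds.add (hsqrtinv.const_mul (3 * Real.log 4))
    · simpa using hA1pos.ne'
  have hval : (A2 - CC * 0 - 4 * 0) / (A1 + 3 * Real.log 4 * 0) = A2 / A1 := by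
    norm_num
  rw [hval] at htend0
  have htend : Filter.Tendsto ψ Filter.atTop (nhds (A2 / A1)) := by
    apply Filter.Tendsto.congr' _ htend0
    filter_upwards [Filter.eventually_ge_atTop 1] with n hn1
    simp only [hψ]
    set v := Real.sqrt (n:ℝ) with hv
    have hv0 : (0:ℝ) < v := lt_of_lt_of_le one_pos (Aux16.one_le_sqrt hn1)
    set u := Real.sqrt v with hu
    have hu0 : (0:ℝ) < u := Real.sqrt_pos.2 hv0
    have husq : u * u = v := Real.mul_self_sqrt hv0.le
    have hvinv : v * v⁻¹ = 1 := mul_inv_cancel₀ hv0.ne'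
    have huvinv : u * v⁻¹ = u⁻¹ := by
      rw [← husq]
      field_simp
    have e1 : A2 - CC * v⁻¹ - 4 * u⁻¹ = (A2 * v - CC - 4 * u) * v⁻¹ := by
      have : (A2 * v - CC - 4 * u) * v⁻¹ = A2 * (v * v⁻¹) - CC * v⁻¹ - 4 * (u * v⁻¹) := by
        ring
      rw [this, hvinv, huvinv, mul_one]
    have e2 : A1 + 3 * Real.log 4 * v⁻¹ = (A1 * v + 3 * Real.log 4) * v⁻¹ := by
      have : (A1 * v + 3 * Real.log 4) * v⁻¹
          = A1 * (v * v⁻¹) + 3 * Real.log 4 * v⁻¹ := by ring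
      rw [this, hvinv, mul_one]
    rw [e1, e2, mul_div_mul_right _ _ (inv_ne_zero hv0.ne')]
  -- coboundedness of g
  set β := min (Real.log 4) (Real.log 4 * (b / c)) with hβ
  have hβpos : 0 < β := lt_min hlog4 (by positivity)
  set γ := Real.sqrt (c / (2 * Real.log 4)) with hγ
  have hγpos : 0 < γ := Real.sqrt_pos.2 (by positivity)
  have hcobev : ∀ᶠ n : ℕ in Filter.atTop, g n ≤ 6 * Real.log 4 / (β * γ) := by
    have htγ : Filter.Tendsto (fun n : ℕ => γ * Real.sqrt n) Filter.atTop Filter.atTop :=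
      Aux16.sqrt_nat_tendsto.const_mul_atTop hγpos
    filter_upwards [Filter.eventually_ge_atTop 1,
      htγ.eventually_ge_atTop (32 / β^2)] with n hn1 hγn
    obtain ⟨M, hM1, hMγ, hlogL⟩ := Aux16.logL_le_main hc hc' hb hn1 (heff n hn1)
    rw [← hβ] at hlogL
    have hMγ' : γ * Real.sqrt n ≤ (M:ℝ) := by rw [hγ]; exact hMγ
    have hM32 : 32 / β^2 ≤ (M:ℝ) := le_trans hγn hMγ
    have hM1' : (1:ℝ) ≤ (M:ℝ) := by exact_mod_cast hM1
    set w := Real.sqrt (M:ℝ) with hw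
    have hw2 : w * w = (M:ℝ) := Real.mul_self_sqrt (Nat.cast_nonneg _)
    have hwge : 4 * Real.sqrt 2 / β ≤ w := by
      have h1 : (4 * Real.sqrt 2 / β)^2 = 32 / β^2 := by
        rw [div_pow, mul_pow, Real.sq_sqrt (by norm_num : (0:ℝ) ≤ 2)]
        norm_num
      have h2 := Real.sqrt_le_sqrt (h1 ▸ hM32)
      rw [Real.sqrt_sq (by positivity)] at h2
      exact h2
    have hlogM : Real.log ((M:ℝ)+1) ≤ 2 * Real.sqrt 2 * w := by
      have l1 := Aux16.log_le_two_sqrt (show (0:ℝ) < (M:ℝ)+1 by linarith)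
      have l2 : Real.sqrt ((M:ℝ)+1) ≤ Real.sqrt (2 * M) := Real.sqrt_le_sqrt (by linarith)
      have l3 : Real.sqrt (2 * (M:ℝ)) = Real.sqrt 2 * w := Real.sqrt_mul (by norm_num) _
      linarith
    have key : 2 * Real.sqrt 2 * w ≤ β / 2 * (M:ℝ) := by
      have s1 : (4 * Real.sqrt 2 / β) * w ≤ (M:ℝ) := by
        nlinarith [mul_le_mul_of_nonneg_right hwge (Real.sqrt_nonneg (M:ℝ))]
      have s2 := mul_le_mul_of_nonneg_left s1 (by positivity : (0:ℝ) ≤ β/2)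
      have s3 : (β/2) * ((4 * Real.sqrt 2 / β) * w) = 2 * Real.sqrt 2 * w := by
        field_simp
        ring
      linarith
    have hB : β / 2 * (M:ℝ) ≤ -(Real.log (distortionLB b (s n))) := by linarith
    have hnum : -(Real.log (distortionUB c (aurelian c n)))
        ≤ 3 * Real.sqrt n * Real.log 4 := by
      have h1 := Aux16.logU_ge hc n
      rw [← hrdef] at h1
      have h2 := Aux16.q_up hc hc' hn1
      have h3 : ((r:ℝ)*c) * (aurelianQ c n : ℝ) ≤ Real.log 4 * (aurelianQ c n : ℝ) :=
        mul_le_mul_of_nonneg_right hrc_le (Nat.cast_nonneg _)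
      have h4 : ((aurelianQ c n : ℝ)+1) * Real.log 4 ≤ 3 * Real.sqrt n * Real.log 4 :=
        mul_le_mul_of_nonneg_right h2 hlog4.le
      linarith
    have hMpos2 : (0:ℝ) < β/2 * (M:ℝ) := by positivity
    have hgn : g n = (-(Real.log (distortionUB c (aurelian c n))))
        / (-(Real.log (distortionLB b (s n)))) := by
      rw [hg, neg_div_neg_eq]
    have hstep1 : g n ≤ (3 * Real.sqrt n * Real.log 4) / (β/2 * (M:ℝ)) := by
      rw [hgn]
      exact div_le_div₀ (by positivity : (0:ℝ) ≤ 3 * Real.sqrt n * Real.log 4)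
        hnum hMpos2 hB
    have hv0 : (0:ℝ) < Real.sqrt n := lt_of_lt_of_le one_pos (Aux16.one_le_sqrt hn1)
    have hMlow : β/2 * (γ * Real.sqrt n) ≤ β/2 * (M:ℝ) :=
      mul_le_mul_of_nonneg_left hMγ' (by positivity)
    have hstep2 : (3 * Real.sqrt n * Real.log 4) / (β/2 * (M:ℝ))
        ≤ (3 * Real.sqrt n * Real.log 4) / (β/2 * (γ * Real.sqrt n)) :=
      div_le_div₀ (by positivity) (le_refl _) (by positivity) hMlow
    have hstep3 : (3 * Real.sqrt n * Real.log 4) / (β/2 * (γ * Real.sqrt n))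
        = 6 * Real.log 4 / (β * γ) := by
      field_simp
      ring
    exact le_trans hstep1 (hstep2.trans_eq hstep3)
  have hcob : Filter.IsCoboundedUnder (· ≥ ·) Filter.atTop g :=
    Filter.isCoboundedUnder_ge_of_eventually_le Filter.atTop hcobev
  have hbdd : Filter.IsBoundedUnder (· ≥ ·) Filter.atTop ψ := htend.isBoundedUnder_ge
  have hlim := Filter.liminf_le_liminf hψg hbdd hcob
  rw [htend.liminf_eq] at hlim
  exact hlim
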